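/- arXiv:1411.4064 — 2 statements merged into one kernel-verified Lean document; each statement's English description precedes it below -/
import Mathlib

section
/- The maximum of the relaxed detection-based tracking objective over continuous distributions equals the maximum of the combinatorial tracking objective over index sequences: max over (p^t ∈ Δ({1,...,J^t}))_{t=1..T} of ∑_t ∑_j p^t_j f(b^t_j) + ∑_{t=2}^T ∑_{j',j} p^{t-1}_{j'} p^t_j g(b^{t-1}_{j'}, b^t_j) equals max over index sequences (j^1,...,j^T) of ∑_t f(b^t_{j^t}) + ∑_{t=2}^T g(b^{t-1}_{j^{t-1}}, b^t_{j^t}). -/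
open Finset

section aux
variable {ι : Type*} [Fintype ι] [DecidableEq ι] {β : ι → Type*} [∀ i, Fintype (β i)]

lemma my_prod_double_update {s s' : ι} (hss : s ≠ s') (R : ι → ℝ) (B C : ℝ) :
    ∏ i, Function.update (Function.update R s B) s' C i
      = C * (B * ∏ i ∈ (univ \ {s'}) \ {s}, R i) := by
  rw [Finset.prod_update_of_mem (mem_univ s'),
      Finset.prod_update_of_mem (by simp [hss] : s ∈ univ \ {s'})]

lemma my_prod_single_update (s : ι) (R : ι → ℝ) (B : ℝ) :
    ∏ i, Function.update R s B i = B * ∏ i ∈ univ \ {s}, R i :=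
  Finset.prod_update_of_mem (mem_univ s) _ _

lemma my_sum_prod_mul2 (p : ∀ i, β i → ℝ) (hp : ∀ i, ∑ x, p i x = 1)
    {s s' : ι} (hss : s ≠ s') (v : β s → ℝ) (u : β s' → ℝ) :
    ∑ a : ∀ i, β i, (∏ i, p i (a i)) * (v (a s) * u (a s'))
      = (∑ x, p s x * v x) * (∑ y, p s' y * u y) := by
  set q : ∀ i, β i → ℝ :=
    Function.update (Function.update p s (fun z => p s z * v z)) s'
      (fun z => p s' z * u z) with hq
  have hpoint : ∀ a : ∀ i, β i,
      (∏ i, p i (a i)) * (v (a s) * u (a s')) = ∏ i, q i (a i) := by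
    intro a
    have h1 : ∀ i, q i (a i)
        = Function.update (Function.update (fun i => p i (a i)) s (p s (a s) * v (a s))) s'
            (p s' (a s') * u (a s')) i := by
      intro i
      rcases eq_or_ne i s' with rfl | h1
      · simp [hq]
      · rcases eq_or_ne i s with rfl | h2
        · simp [hq, Function.update_of_ne h1]
        · simp [hq, Function.update_of_ne h1, Function.update_of_ne h2]
    have h2 : (fun i => p i (a i))
        = Function.update (Function.update (fun i => p i (a i)) s (p s (a s)))
            s' (p s' (a s')) := by
      simp [Function.update_eq_self]
    rw [Finset.prod_congr rfl fun i _ => h1 i, my_prod_double_update hss]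
    conv_lhs => rw [show (∏ i, p i (a i)) = ∏ i, (fun i => p i (a i)) i from rfl, h2,
      my_prod_double_update hss]
    ring
  rw [Finset.sum_congr rfl fun a _ => hpoint a, ← Fintype.prod_sum q]
  have h3 : ∀ i, (∑ x, q i x)
      = Function.update (Function.update (fun i => ∑ x, p i x) s (∑ x, p s x * v x)) s'
          (∑ y, p s' y * u y) i := by
    intro i
    rcases eq_or_ne i s' with rfl | h1
    · simp [hq]
    · rcases eq_or_ne i s with rfl | h2
      · simp [hq, Function.update_of_ne h1]
      · simp [hq, Function.update_of_ne h1, Function.update_of_ne h2]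
  rw [Finset.prod_congr rfl fun i _ => h3 i, my_prod_double_update hss,
    Finset.prod_eq_one fun i _ => hp i]
  ring

lemma my_sum_prod_mul1 (p : ∀ i, β i → ℝ) (hp : ∀ i, ∑ x, p i x = 1)
    (s : ι) (v : β s → ℝ) :
    ∑ a : ∀ i, β i, (∏ i, p i (a i)) * v (a s) = ∑ x, p s x * v x := by
  set q : ∀ i, β i → ℝ := Function.update p s (fun z => p s z * v z) with hq
  have hpoint : ∀ a : ∀ i, β i,
      (∏ i, p i (a i)) * v (a s) = ∏ i, q i (a i) := by
    intro a
    have h1 : ∀ i, q i (a i)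
        = Function.update (fun i => p i (a i)) s (p s (a s) * v (a s)) i := by
      intro i
      rcases eq_or_ne i s with rfl | h2
      · simp [hq]
      · simp [hq, Function.update_of_ne h2]
    have h2 : (fun i => p i (a i))
        = Function.update (fun i => p i (a i)) s (p s (a s)) := by
      simp [Function.update_eq_self]
    rw [Finset.prod_congr rfl fun i _ => h1 i, my_prod_single_update]
    conv_lhs => rw [show (∏ i, p i (a i)) = ∏ i, (fun i => p i (a i)) i from rfl, h2,
      my_prod_single_update]
    ring
  rw [Finset.sum_congr rfl fun a _ => hpoint a, ← Fintype.prod_sum q]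
  have h3 : ∀ i, (∑ x, q i x)
      = Function.update (fun i => ∑ x, p i x) s (∑ x, p s x * v x) i := by
    intro i
    rcases eq_or_ne i s with rfl | h2
    · simp [hq]
    · simp [hq, Function.update_of_ne h2]
  rw [Finset.prod_congr rfl fun i _ => h3 i, my_prod_single_update,
    Finset.prod_eq_one fun i _ => hp i]
  ring

lemma my_sum_prod_one (p : ∀ i, β i → ℝ) (hp : ∀ i, ∑ x, p i x = 1) :
    ∑ a : ∀ i, β i, (∏ i, p i (a i)) = 1 := by
  rw [← Fintype.prod_sum p, Finset.prod_eq_one fun i _ => hp i]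

lemma my_marg2 (p : ∀ i, β i → ℝ) (hp : ∀ i, ∑ x, p i x = 1)
    {s s' : ι} (hss : s ≠ s') (φ : β s → β s' → ℝ) [DecidableEq (β s)] [DecidableEq (β s')] :
    ∑ a : ∀ i, β i, (∏ i, p i (a i)) * φ (a s) (a s')
      = ∑ x, ∑ y, p s x * p s' y * φ x y := by
  have step : ∀ a : ∀ i, β i, (∏ i, p i (a i)) * φ (a s) (a s')
      = ∑ x, ∑ y, ((∏ i, p i (a i)) *
          ((if a s = x then (1:ℝ) else 0) * (if a s' = y then (1:ℝ) else 0))) * φ x y := by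
    intro a
    simp [ite_mul, mul_ite, Finset.sum_ite_eq]
  rw [Finset.sum_congr rfl fun a _ => step a, Finset.sum_comm]
  refine Finset.sum_congr rfl fun x _ => ?_
  rw [Finset.sum_comm]
  refine Finset.sum_congr rfl fun y _ => ?_
  rw [← Finset.sum_mul, my_sum_prod_mul2 p hp hss (fun z => if z = x then (1:ℝ) else 0)
    (fun z => if z = y then (1:ℝ) else 0)]
  simp [mul_ite]

end aux


/-- combinatorial objective -/
def Fobj (T : ℕ) (J : ℕ → ℕ) (f : (t : ℕ) → Fin (J t) → ℝ)
    (g : (t : ℕ) → Fin (J t) → Fin (J (t + 1)) → ℝ) (j : (t : ℕ) → Fin (J t)) : ℝ :=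
  (∑ t ∈ Finset.range T, f t (j t)) + ∑ t ∈ Finset.range (T - 1), g t (j t) (j (t + 1))

/-- The maximum of the relaxed detection-based tracking objective over
per-frame probability distributions over detections equals the maximum of the combinatorial
tracking objective over index sequences. -/
theorem stmt10 (T : ℕ) (hT : 1 ≤ T) (J : ℕ → ℕ) (hJ : ∀ t, 0 < J t)
    (f : (t : ℕ) → Fin (J t) → ℝ)
    (g : (t : ℕ) → Fin (J t) → Fin (J (t + 1)) → ℝ) :
    ∃ M : ℝ,
      IsGreatest {y | ∃ p : (t : ℕ) → Fin (J t) → ℝ,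
          (∀ t, (∀ i, 0 ≤ p t i) ∧ ∑ i, p t i = 1) ∧
          y = (∑ t ∈ Finset.range T, ∑ i, p t i * f t i) +
              ∑ t ∈ Finset.range (T - 1), ∑ i', ∑ i, p t i' * p (t + 1) i * g t i' i} M ∧
      IsGreatest {y | ∃ j : (t : ℕ) → Fin (J t),
          y = (∑ t ∈ Finset.range T, f t (j t)) +
              ∑ t ∈ Finset.range (T - 1), g t (j t) (j (t + 1))} M := by
  classical
  -- extension of a finitely-supported choice to all of ℕ
  set ext : (∀ s : Fin T, Fin (J s.1)) → (∀ t : ℕ, Fin (J t)) :=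
    fun a t => if h : t < T then a ⟨t, h⟩ else ⟨0, hJ t⟩ with hext
  haveI : Nonempty (∀ s : Fin T, Fin (J s.1)) := ⟨fun s => ⟨0, hJ s.1⟩⟩
  -- Fobj only depends on the first T values
  have hFr : ∀ j : (∀ t : ℕ, Fin (J t)), Fobj T J f g j = Fobj T J f g (ext (fun s => j s.1)) := by
    intro j
    unfold Fobj
    congr 1
    · refine Finset.sum_congr rfl fun t ht => ?_
      have h1 : t < T := Finset.mem_range.mp ht
      rw [hext]; simp only [dif_pos h1]
    · refine Finset.sum_congr rfl fun t ht => ?_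
      have h0 : t < T - 1 := Finset.mem_range.mp ht
      have h1 : t < T := by omega
      have h2 : t + 1 < T := by omega
      rw [hext]; simp only [dif_pos h1, dif_pos h2]
  obtain ⟨a₀, -, hM⟩ := Finset.exists_mem_eq_sup' (Finset.univ_nonempty)
    (fun a : ∀ s : Fin T, Fin (J s.1) => Fobj T J f g (ext a))
  set M := Finset.univ.sup' Finset.univ_nonempty
    (fun a : ∀ s : Fin T, Fin (J s.1) => Fobj T J f g (ext a)) with hMdef
  refine ⟨M, ⟨?_, ?_⟩, ⟨?_, ?_⟩⟩
  · -- membership in relaxed set: Dirac distribution at ext a₀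
    refine ⟨fun t i => if i = ext a₀ t then (1:ℝ) else 0, fun t => ⟨fun i => by positivity, by simp⟩, ?_⟩
    rw [hM]
    unfold Fobj
    congr 1
    · refine Finset.sum_congr rfl fun t _ => ?_
      simp [ite_mul]
    · refine Finset.sum_congr rfl fun t _ => ?_
      simp [ite_mul, mul_ite, Finset.sum_ite_eq']
  · -- upper bound for relaxed set
    rintro y ⟨p, hp, rfl⟩
    set p' : ∀ s : Fin T, Fin (J s.1) → ℝ := fun s => p s.1 with hp'
    have hp1 : ∀ s : Fin T, ∑ x, p' s x = 1 := fun s => (hp s.1).2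
    have expand :
        (∑ t ∈ Finset.range T, ∑ i, p t i * f t i) +
            ∑ t ∈ Finset.range (T - 1), ∑ i', ∑ i, p t i' * p (t + 1) i * g t i' i
          = ∑ a : ∀ s : Fin T, Fin (J s.1), (∏ s, p' s (a s)) * Fobj T J f g (ext a) := by
      unfold Fobj
      simp only [mul_add, Finset.sum_add_distrib]
      congr 1
      · simp_rw [Finset.mul_sum]
        rw [Finset.sum_comm]
        refine Finset.sum_congr rfl fun t ht => ?_
        have h1 : t < T := Finset.mem_range.mp ht
        have : ∀ a : ∀ s : Fin T, Fin (J s.1),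
            (∏ s, p' s (a s)) * f t (ext a t) = (∏ s, p' s (a s)) * f t (a ⟨t, h1⟩) := by
          intro a; rw [hext]; simp only [dif_pos h1]
        rw [Finset.sum_congr rfl fun a _ => this a,
          my_sum_prod_mul1 p' hp1 ⟨t, h1⟩ (f t)]
      · simp_rw [Finset.mul_sum]
        rw [Finset.sum_comm]
        refine Finset.sum_congr rfl fun t ht => ?_
        have h0 : t < T - 1 := Finset.mem_range.mp ht
        have h1 : t < T := by omega
        have h2 : t + 1 < T := by omega
        have hss : (⟨t, h1⟩ : Fin T) ≠ ⟨t + 1, h2⟩ := by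
          simp [Fin.ext_iff]
        have : ∀ a : ∀ s : Fin T, Fin (J s.1),
            (∏ s, p' s (a s)) * g t (ext a t) (ext a (t + 1))
              = (∏ s, p' s (a s)) * g t (a ⟨t, h1⟩) (a ⟨t + 1, h2⟩) := by
          intro a; rw [hext]; simp only [dif_pos h1, dif_pos h2]
        rw [Finset.sum_congr rfl fun a _ => this a,
          my_marg2 p' hp1 hss (g t)]
    rw [expand]
    calc ∑ a : ∀ s : Fin T, Fin (J s.1), (∏ s, p' s (a s)) * Fobj T J f g (ext a)
        ≤ ∑ a : ∀ s : Fin T, Fin (J s.1), (∏ s, p' s (a s)) * M := by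
          refine Finset.sum_le_sum fun a _ => ?_
          refine mul_le_mul_of_nonneg_left ?_ ?_
          · rw [hMdef]
            exact Finset.le_sup' (f := fun a => Fobj T J f g (ext a)) (Finset.mem_univ a)
          · exact Finset.prod_nonneg fun s _ => (hp s.1).1 (a s)
      _ = M := by rw [← Finset.sum_mul, my_sum_prod_one p' hp1, one_mul]
  · -- membership in combinatorial set
    exact ⟨ext a₀, by rw [hM]; rfl⟩
  · -- upper bound for combinatorial set
    rintro y ⟨j, rfl⟩
    have h1 : (∑ t ∈ Finset.range T, f t (j t)) +
        ∑ t ∈ Finset.range (T - 1), g t (j t) (j (t + 1)) = Fobj T J f g j := rfl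
    rw [h1, hFr j, hMdef]
    exact Finset.le_sup' (f := fun a : ∀ s : Fin T, Fin (J s.1) => Fobj T J f g (ext a))
      (Finset.mem_univ (fun s : Fin T => j s.1))
end

section
/- The relaxed HMM MAP objective over per-frame state distributions achieves the same maximum as the discrete Viterbi objective: max over (q^t ∈ Δ({1,...,K}))_{t=1..T} of ∑_t ∑_k q^t_k h(k, t) + ∑_{t=2}^T ∑_{k',k} q^{t-1}_{k'} q^t_k a(k',k) equals max over state sequences (k^1,...,k^T) of ∑_t h(k^t, t) + ∑_{t=2}^T a(k^{t-1}, k^t). -/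
private lemma marg1 {T K : ℕ} (q : ℕ → Fin K → ℝ) (hq1 : ∀ t, ∑ k, q t k = 1)
    (t₀ : Fin T) (g : Fin K → ℝ) :
    ∑ σ : Fin T → Fin K, (∏ t, q t.val (σ t)) * g (σ t₀) = ∑ k, q t₀.val k * g k := by
  have h1 : ∀ σ : Fin T → Fin K,
      (∏ t, q t.val (σ t)) * g (σ t₀)
        = ∏ t, (q t.val (σ t) * (if t = t₀ then g (σ t) else 1)) := by
    intro σ
    rw [Finset.prod_mul_distrib, Finset.prod_ite_eq' Finset.univ t₀ (fun t => g (σ t))]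
    simp
  simp_rw [h1]
  rw [← Fintype.piFinset_univ, ← Finset.prod_univ_sum (fun _ : Fin T => (Finset.univ : Finset (Fin K)))
      (fun t m => q t.val m * if t = t₀ then g m else 1)]
  have h2 : ∀ t : Fin T, (∑ m, q t.val m * (if t = t₀ then g m else 1))
      = if t = t₀ then ∑ m, q t₀.val m * g m else 1 := by
    intro t
    by_cases ht : t = t₀ <;> simp [ht, hq1]
  simp_rw [h2]
  rw [Finset.prod_ite_eq' Finset.univ t₀ (fun _ => ∑ m, q t₀.val m * g m)]
  simp

private lemma marg2 {T K : ℕ} (q : ℕ → Fin K → ℝ) (hq1 : ∀ t, ∑ k, q t k = 1)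
    (t₀ t₁ : Fin T) (hne : t₀ ≠ t₁) (g : Fin K → Fin K → ℝ) :
    ∑ σ : Fin T → Fin K, (∏ t, q t.val (σ t)) * g (σ t₀) (σ t₁)
      = ∑ k', ∑ k, q t₀.val k' * q t₁.val k * g k' k := by
  have key : ∀ (k' k : Fin K),
      ∑ σ : Fin T → Fin K, (∏ t, q t.val (σ t))
          * ((if σ t₀ = k' then (1:ℝ) else 0) * (if σ t₁ = k then (1:ℝ) else 0))
        = q t₀.val k' * q t₁.val k := by
    intro k' k
    have h1 : ∀ σ : Fin T → Fin K,
        (∏ t, q t.val (σ t)) * ((if σ t₀ = k' then (1:ℝ) else 0) * (if σ t₁ = k then (1:ℝ) else 0))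
          = ∏ t, (q t.val (σ t) *
              ((if t = t₀ then (if σ t = k' then (1:ℝ) else 0) else 1) *
               (if t = t₁ then (if σ t = k then (1:ℝ) else 0) else 1))) := by
      intro σ
      rw [Finset.prod_mul_distrib, Finset.prod_mul_distrib,
        Finset.prod_ite_eq' Finset.univ t₀ (fun t => if σ t = k' then (1:ℝ) else 0),
        Finset.prod_ite_eq' Finset.univ t₁ (fun t => if σ t = k then (1:ℝ) else 0)]
      simp
    simp_rw [h1]
    rw [← Fintype.piFinset_univ, ← Finset.prod_univ_sum (fun _ : Fin T => (Finset.univ : Finset (Fin K)))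
      (fun t m => q t.val m *
        ((if t = t₀ then (if m = k' then (1:ℝ) else 0) else 1) *
         (if t = t₁ then (if m = k then (1:ℝ) else 0) else 1)))]
    have h2 : ∀ t : Fin T,
        (∑ m, q t.val m *
          ((if t = t₀ then (if m = k' then (1:ℝ) else 0) else 1) *
           (if t = t₁ then (if m = k then (1:ℝ) else 0) else 1)))
        = (if t = t₀ then q t₀.val k' else 1) * (if t = t₁ then q t₁.val k else 1) := by
      intro t
      by_cases h0 : t = t₀
      · subst h0
        have hne' : ¬ (t = t₁) := hne
        simp [hne', mul_ite, mul_one, mul_zero, Finset.sum_ite_eq']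
      · by_cases h1' : t = t₁
        · subst h1'
          simp [h0, mul_ite, mul_one, mul_zero, Finset.sum_ite_eq']
        · simp [h0, h1', hq1]
    simp_rw [h2]
    rw [Finset.prod_mul_distrib,
      Finset.prod_ite_eq' Finset.univ t₀ (fun _ => q t₀.val k'),
      Finset.prod_ite_eq' Finset.univ t₁ (fun _ => q t₁.val k)]
    simp
  have hrep : ∀ σ : Fin T → Fin K, g (σ t₀) (σ t₁)
      = ∑ k', ∑ k, ((if σ t₀ = k' then (1:ℝ) else 0) * (if σ t₁ = k then (1:ℝ) else 0)) * g k' k := by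
    intro σ
    simp [ite_mul, zero_mul, one_mul, Finset.sum_ite_eq]
  calc ∑ σ : Fin T → Fin K, (∏ t, q t.val (σ t)) * g (σ t₀) (σ t₁)
      = ∑ k', ∑ k, ∑ σ : Fin T → Fin K,
          ((∏ t, q t.val (σ t)) * ((if σ t₀ = k' then (1:ℝ) else 0) * (if σ t₁ = k then (1:ℝ) else 0)))
            * g k' k := by
        simp_rw [hrep, Finset.mul_sum]
        rw [Finset.sum_comm]
        refine Finset.sum_congr rfl fun k' _ => ?_
        rw [Finset.sum_comm]
        refine Finset.sum_congr rfl fun k _ => Finset.sum_congr rfl fun σ _ => by ring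
    _ = ∑ k', ∑ k, q t₀.val k' * q t₁.val k * g k' k := by
        refine Finset.sum_congr rfl fun k' _ => Finset.sum_congr rfl fun k _ => ?_
        rw [← Finset.sum_mul, key]

/-- The relaxed HMM MAP objective over per-frame state distributions achieves
the same maximum as the discrete Viterbi objective over state sequences.  (Frames are
indexed 0,…,T−1; h k t is the output log-score of state k at frame t; a k' k is the
transition log-score.) -/
theorem stmt11 (T K : ℕ) (hT : 1 ≤ T) (hK : 1 ≤ K)
    (h : Fin K → ℕ → ℝ) (a : Fin K → Fin K → ℝ) :
    ∃ M : ℝ,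
      IsGreatest {y | ∃ q : ℕ → Fin K → ℝ,
          (∀ t, (∀ k, 0 ≤ q t k) ∧ ∑ k, q t k = 1) ∧
          y = (∑ t ∈ Finset.range T, ∑ k, q t k * h k t) +
              ∑ t ∈ Finset.range (T - 1), ∑ k', ∑ k, q t k' * q (t + 1) k * a k' k} M ∧
      IsGreatest {y | ∃ k : ℕ → Fin K,
          y = (∑ t ∈ Finset.range T, h (k t) t) +
              ∑ t ∈ Finset.range (T - 1), a (k t) (k (t + 1))} M := by
  have hT0 : 0 < T := hT
  set ext : (Fin T → Fin K) → ℕ → Fin K :=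
    fun σ n => if hn : n < T then σ ⟨n, hn⟩ else σ ⟨0, hT0⟩ with hextdef
  set G : (ℕ → Fin K) → ℝ :=
    fun k => (∑ t ∈ Finset.range T, h (k t) t) +
      ∑ t ∈ Finset.range (T - 1), a (k t) (k (t + 1)) with hGdef
  -- G depends only on values below T
  have hGcongr : ∀ k k' : ℕ → Fin K, (∀ n, n < T → k n = k' n) → G k = G k' := by
    intro k k' hkk
    simp only [hGdef]
    congr 1
    · exact Finset.sum_congr rfl fun t ht => by
        rw [hkk t (Finset.mem_range.mp ht)]
    · refine Finset.sum_congr rfl fun t ht => ?_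
      have ht' := Finset.mem_range.mp ht
      rw [hkk t (by omega), hkk (t + 1) (by omega)]
  have hextk : ∀ k : ℕ → Fin K, G k = G (ext (fun i : Fin T => k i.val)) := by
    intro k
    refine hGcongr _ _ fun n hn => ?_
    simp only [hextdef, dif_pos hn]
  obtain ⟨σs, -, hmax⟩ :
      ∃ σs ∈ (Finset.univ : Finset (Fin T → Fin K)),
        ∀ σ ∈ (Finset.univ : Finset (Fin T → Fin K)), G (ext σ) ≤ G (ext σs) :=
    Finset.exists_max_image _ (fun σ => G (ext σ)) ⟨fun _ => ⟨0, hK⟩, Finset.mem_univ _⟩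
  refine ⟨G (ext σs), ⟨?_, ?_⟩, ⟨ext σs, rfl⟩, ?_⟩
  · -- relaxed membership via indicator of ext σs
    refine ⟨fun t k => if k = ext σs t then 1 else 0,
      fun t => ⟨fun k => by positivity, by simp⟩, ?_⟩
    simp only [hGdef, ite_mul, one_mul, zero_mul, Finset.sum_ite_irrel, Finset.sum_const_zero,
      Finset.sum_ite_eq', Finset.mem_univ, if_true]
  · -- relaxed upper bound
    rintro y ⟨q, hq, rfl⟩
    have hq1 : ∀ t, ∑ k, q t k = 1 := fun t => (hq t).2
    have hwnn : ∀ σ : Fin T → Fin K, 0 ≤ ∏ t, q t.val (σ t) :=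
      fun σ => Finset.prod_nonneg fun t _ => (hq t.val).1 _
    have hE : ∑ σ : Fin T → Fin K, (∏ t, q t.val (σ t)) * G (ext σ)
        = (∑ t ∈ Finset.range T, ∑ k, q t k * h k t) +
          ∑ t ∈ Finset.range (T - 1), ∑ k', ∑ k, q t k' * q (t + 1) k * a k' k := by
      simp only [hGdef, mul_add, Finset.sum_add_distrib]
      congr 1
      · simp_rw [Finset.mul_sum]
        rw [Finset.sum_comm]
        refine Finset.sum_congr rfl fun t ht => ?_
        have htT : t < T := Finset.mem_range.mp ht
        have hee : ∀ σ : Fin T → Fin K, ext σ t = σ ⟨t, htT⟩ := by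
          intro σ; simp only [hextdef, dif_pos htT]
        simp_rw [hee]
        exact marg1 q hq1 ⟨t, htT⟩ (fun m => h m t)
      · simp_rw [Finset.mul_sum]
        rw [Finset.sum_comm]
        refine Finset.sum_congr rfl fun t ht => ?_
        have htT : t < T - 1 := Finset.mem_range.mp ht
        have h1 : t < T := by omega
        have h2 : t + 1 < T := by omega
        have hee : ∀ σ : Fin T → Fin K, ext σ t = σ ⟨t, h1⟩ := by
          intro σ; simp only [hextdef, dif_pos h1]
        have hee' : ∀ σ : Fin T → Fin K, ext σ (t + 1) = σ ⟨t + 1, h2⟩ := by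
          intro σ; simp only [hextdef, dif_pos h2]
        simp_rw [hee, hee']
        exact marg2 q hq1 ⟨t, h1⟩ ⟨t + 1, h2⟩ (by simp [Fin.ext_iff]) a
    have hW : ∑ σ : Fin T → Fin K, ∏ t, q t.val (σ t) = 1 := by
      have := marg1 q hq1 (⟨0, hT0⟩ : Fin T) (fun _ => (1:ℝ))
      simpa [hq1] using this
    calc (∑ t ∈ Finset.range T, ∑ k, q t k * h k t) +
          ∑ t ∈ Finset.range (T - 1), ∑ k', ∑ k, q t k' * q (t + 1) k * a k' k
        = ∑ σ : Fin T → Fin K, (∏ t, q t.val (σ t)) * G (ext σ) := hE.symm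
      _ ≤ ∑ σ : Fin T → Fin K, (∏ t, q t.val (σ t)) * G (ext σs) :=
          Finset.sum_le_sum fun σ _ =>
            mul_le_mul_of_nonneg_left (hmax σ (Finset.mem_univ _)) (hwnn σ)
      _ = G (ext σs) := by rw [← Finset.sum_mul, hW, one_mul]
  · -- discrete upper bound
    rintro y ⟨k, rfl⟩
    calc (∑ t ∈ Finset.range T, h (k t) t) +
          ∑ t ∈ Finset.range (T - 1), a (k t) (k (t + 1))
        = G k := rfl
      _ = G (ext (fun i : Fin T => k i.val)) := hextk k
      _ ≤ G (ext σs) := hmax (fun i : Fin T => k i.val) (Finset.mem_univ _)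
end
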